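/- (Local strict support inequality.) Let x* ∈ B with x*_i > 0 for all i. Then there exists ε > 0 such that for every y ∈ B with 0 < ‖y − x*‖ < ε, one has ∏_{j=1}^n (1 + x*_j) · (1 + ∑_{i=1}^n (y_i − x*_i)/(1 + x*_i)) > ∏_{j=1}^n (1 + y_j). -/

import Mathlib

open Finset


lemma prod_taylor2 {ι : Type*} [DecidableEq ι] (s : Finset ι) (t : ι → ℝ)
    (h : ∑ i ∈ s, |t i| ≤ 1) :
    |(∏ i ∈ s, (1 + t i)) - 1 - (∑ i ∈ s, t i) -
      ((∑ i ∈ s, t i)^2 - ∑ i ∈ s, (t i)^2)/2| ≤ (∑ i ∈ s, |t i|)^3 := by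
  induction s using Finset.induction_on with
  | empty => simp
  | @insert a s ha ih =>
    rw [Finset.sum_insert ha, Finset.prod_insert ha, Finset.sum_insert ha,
      Finset.sum_insert ha] at *
    set σ := ∑ i ∈ s, t i
    set ρ := ∑ i ∈ s, (t i)^2
    set σ' := ∑ i ∈ s, |t i|
    set P := ∏ i ∈ s, (1 + t i)
    have hτ : 0 ≤ |t a| := abs_nonneg _
    have hσ'1 : σ' ≤ 1 := by linarith
    have hσ'0 : 0 ≤ σ' := Finset.sum_nonneg fun i _ => abs_nonneg _
    have ihh := ih hσ'1
    have hσσ' : |σ| ≤ σ' := Finset.abs_sum_le_sum_abs _ _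
    have hρσ' : ρ ≤ σ'^2 := by
      have := Finset.sum_sq_le_sq_sum_of_nonneg (f := fun i => |t i|) (s := s)
        (fun i _ => abs_nonneg _)
      simpa [sq_abs] using this
    have hρ0 : 0 ≤ ρ := Finset.sum_nonneg fun i _ => sq_nonneg _
    have key : (1 + t a) * P - 1 - (t a + σ) - ((t a + σ)^2 - ((t a)^2 + ρ))/2
        = (P - 1 - σ - (σ^2 - ρ)/2) * (1 + t a) + t a * ((σ^2 - ρ)/2) := by ring
    rw [key]
    have h1 : |(P - 1 - σ - (σ^2 - ρ)/2) * (1 + t a)| ≤ σ'^3 * (1 + |t a|) := by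
      rw [abs_mul]
      have h1a : |1 + t a| ≤ 1 + |t a| := abs_add_le 1 (t a) |>.trans (by simp)
      exact mul_le_mul ihh h1a (abs_nonneg _) (by positivity)
    have h2 : |t a * ((σ^2 - ρ)/2)| ≤ |t a| * (σ'^2/2) := by
      rw [abs_mul]
      have h2a : |(σ^2 - ρ)/2| ≤ σ'^2/2 := by
        rw [abs_div, abs_two]
        have : |σ^2 - ρ| ≤ σ'^2 := by
          rw [abs_sub_le_iff]
          constructor <;> nlinarith [sq_abs σ, mul_self_le_mul_self (abs_nonneg σ) hσσ', sq_nonneg σ']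
        linarith
      exact mul_le_mul_of_nonneg_left h2a hτ
    have h3 : |t a| * σ'^3 ≤ |t a| * σ'^2 :=
      mul_le_mul_of_nonneg_left (pow_le_pow_of_le_one hσ'0 hσ'1 (by norm_num)) hτ
    calc |(P - 1 - σ - (σ^2 - ρ)/2) * (1 + t a) + t a * ((σ^2 - ρ)/2)|
        ≤ |(P - 1 - σ - (σ^2 - ρ)/2) * (1 + t a)| + |t a * ((σ^2 - ρ)/2)| := abs_add_le _ _
      _ ≤ σ'^3 * (1 + |t a|) + |t a| * (σ'^2/2) := by linarith
      _ ≤ (|t a| + σ')^3 := by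
          nlinarith [mul_nonneg hσ'0 (sq_nonneg (t a)), pow_nonneg hτ 3,
            mul_nonneg (mul_nonneg hτ hτ) hσ'0, mul_nonneg (mul_nonneg hτ hσ'0) hσ'0]

noncomputable def hfun (n : ℕ) (a : ℝ) (x : Fin n → ℝ) : ℝ :=
  (∑ i, x i / (1 + x i)) + (1 - a) / ∏ j, (1 + x j)

set_option maxHeartbeats 2000000 in
theorem stmt5 (n : ℕ) (hn : 2 ≤ n) (a : ℝ) (ha0 : 0 < a) (ha1 : a < 1)
    (xs : Fin n → ℝ) (hxs : ∀ i, 0 < xs i) (hxB : hfun n a xs = 1) :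
    ∃ ε > 0, ∀ y : Fin n → ℝ, (∀ i, 0 ≤ y i) → hfun n a y = 1 →
      0 < ‖y - xs‖ → ‖y - xs‖ < ε →
      (∏ j, (1 + xs j)) * (1 + ∑ i, (y i - xs i) / (1 + xs i)) >
        ∏ j, (1 + y j) := by
  have hn2 : (2:ℝ) ≤ (n:ℝ) := by exact_mod_cast hn
  haveI : Nonempty (Fin n) := ⟨⟨0, by omega⟩⟩
  have hn0 : (0:ℝ) < (n:ℝ) := by linarith
  have h1x : ∀ i, (0:ℝ) < 1 + xs i := fun i => by linarith [hxs i]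
  set v : Fin n → ℝ := fun i => 1 / (1 + xs i) with hv
  have hv0 : ∀ i, 0 < v i := fun i => div_pos one_pos (h1x i)
  have hv1 : ∀ i, v i < 1 := fun i => by
    rw [hv]; simp only
    rw [div_lt_one (h1x i)]; linarith [hxs i]
  set P : ℝ := ∏ j, (1 + xs j) with hPdef
  have hP0 : 0 < P := Finset.prod_pos fun i _ => h1x i
  set Q : ℝ := (1 - a) / P with hQdef
  have hQ0 : 0 < Q := div_pos (by linarith) hP0
  have hQv : ∀ i, Q < v i := by
    intro i
    have h1 : v i * P = ∏ j ∈ Finset.univ.erase i, (1 + xs j) := by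
      rw [hPdef, ← Finset.mul_prod_erase Finset.univ _ (Finset.mem_univ i), hv]
      simp only
      rw [one_div, inv_mul_eq_div]
      exact mul_div_cancel_left₀ _ (ne_of_gt (h1x i))
    have h2 : (1:ℝ) ≤ ∏ j ∈ Finset.univ.erase i, (1 + xs j) := by
      have := Finset.prod_le_prod (s := Finset.univ.erase i) (f := fun _ => (1:ℝ))
        (g := fun j => 1 + xs j) (fun j _ => zero_le_one)
        (fun j _ => by show (1:ℝ) ≤ 1 + xs j; linarith [hxs j])
      simpa using this
    rw [hQdef, div_lt_iff₀ hP0]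
    nlinarith
  have i0 : Fin n := ⟨0, by omega⟩
  have hQ1 : Q < 1 := (hQv i0).trans (hv1 i0)
  -- constraint for xs
  have hsum_aux : ∀ (x : Fin n → ℝ), (∀ i, 0 < 1 + x i) → hfun n a x = 1 →
      ∑ i, 1/(1 + x i) = (n:ℝ) - 1 + (1 - a) / ∏ j, (1 + x j) := by
    intro x hx hxB
    have hterm : ∀ i, x i / (1 + x i) = 1 - 1/(1 + x i) := fun i => by
      field_simp [ne_of_gt (hx i)]; ring
    rw [hfun] at hxB
    rw [Finset.sum_congr rfl fun i _ => hterm i, Finset.sum_sub_distrib,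
      Finset.sum_const, Finset.card_univ, Fintype.card_fin, nsmul_eq_mul, mul_one] at hxB
    linarith
  have hsumv : ∑ i, v i = (n:ℝ) - 1 + Q := by
    have := hsum_aux xs h1x hxB
    rw [hv]; rw [hQdef, hPdef]; exact this
  set m : Fin n → ℝ := fun i => v i - Q with hmdef
  have hm0 : ∀ i, 0 < m i := fun i => by simp [hmdef]; linarith [hQv i]
  have hm1 : ∀ i, m i < 1 - Q := fun i => by simp [hmdef]; linarith [hv1 i]
  set μ : ℝ := ∑ i, m i with hμdef
  set M : ℝ := ∑ i, (m i)^2 with hMdef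
  have hμ : μ = ((n:ℝ) - 1) * (1 - Q) := by
    rw [hμdef, hmdef]
    simp only
    rw [Finset.sum_sub_distrib, hsumv, Finset.sum_const, Finset.card_univ,
      Fintype.card_fin, nsmul_eq_mul]
    ring
  have hμ0 : 0 < μ := Finset.sum_pos (fun i _ => hm0 i) Finset.univ_nonempty
  have hM0 : 0 < M := Finset.sum_pos (fun i _ => pow_pos (hm0 i) 2) Finset.univ_nonempty
  have hMlt : M < (1 - Q) * μ := by
    rw [hMdef, hμdef, Finset.mul_sum]
    exact Finset.sum_lt_sum_of_nonempty Finset.univ_nonempty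
      (fun i _ => by nlinarith [hm0 i, hm1 i])
  have hkey : ((n:ℝ) - 1) * M < μ^2 := by nlinarith
  set δ : ℝ := μ^2/M - ((n:ℝ) - 1) with hδdef
  have hδ0 : 0 < δ := by
    rw [hδdef, sub_pos, lt_div_iff₀ hM0]; nlinarith
  set c : ℝ := μ / M with hcdef
  have hc0 : 0 < c := div_pos hμ0 hM0
  have hCSnorm : ∑ i, (1 - c * m i)^2 = 1 - δ := by
    calc ∑ i, (1 - c * m i)^2 = ∑ i, (1 - (2*c) * m i + c^2 * (m i)^2) :=
          Finset.sum_congr rfl fun i _ => by ring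
      _ = (n:ℝ) - 2*c*μ + c^2*M := by
          rw [Finset.sum_add_distrib, Finset.sum_sub_distrib, Finset.sum_const,
            Finset.card_univ, Fintype.card_fin, nsmul_eq_mul, mul_one,
            ← Finset.mul_sum, ← Finset.mul_sum, ← hμdef, ← hMdef]
      _ = 1 - δ := by rw [hδdef, hcdef]; field_simp; ring
  set ε1 : ℝ := min (min (1/2) (δ*M/(44*μ*(n:ℝ)))) (δ/(8*(n:ℝ))) with hε1
  have hε10 : 0 < ε1 := by
    apply lt_min (lt_min (by norm_num) (by positivity)) (by positivity)
  refine ⟨ε1 / (n:ℝ), by positivity, fun y hy0 hyB hne hlt => ?_⟩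
  set t : Fin n → ℝ := fun i => (y i - xs i) / (1 + xs i) with htdef
  have h1y : ∀ i, (0:ℝ) < 1 + y i := fun i => by linarith [hy0 i]
  have h1t : ∀ i, 1 + t i = (1 + y i) * v i := by
    intro i; rw [htdef, hv]; simp only; field_simp [(h1x i).ne']; ring
  have h1t0 : ∀ i, 0 < 1 + t i := fun i => by
    rw [h1t i]; exact mul_pos (h1y i) (hv0 i)
  have hvle : ∀ i, v i ≤ 1 + t i := fun i => by
    rw [h1t i]; nlinarith only [hv0 i, hy0 i]
  set σ : ℝ := ∑ i, t i with hσdef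
  set ρ : ℝ := ∑ i, (t i)^2 with hρdef
  set σ' : ℝ := ∑ i, |t i| with hσ'def
  have hσ'0 : 0 ≤ σ' := Finset.sum_nonneg fun i _ => abs_nonneg _
  have habs_t : ∀ i, |t i| ≤ ‖y - xs‖ := by
    intro i
    have h1 : |t i| = |y i - xs i| / (1 + xs i) := by
      rw [htdef]; simp only; rw [abs_div, abs_of_pos (h1x i)]
    have h2 : |y i - xs i| / (1 + xs i) ≤ |y i - xs i| := by
      apply div_le_self (abs_nonneg _); linarith [hxs i]
    have h3 : |y i - xs i| ≤ ‖y - xs‖ := by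
      have := norm_le_pi_norm (y - xs) i
      simpa [Real.norm_eq_abs] using this
    linarith
  have hσ'ε : σ' < ε1 := by
    have h1 : σ' ≤ (n:ℝ) * ‖y - xs‖ := by
      calc σ' ≤ ∑ _i : Fin n, ‖y - xs‖ := Finset.sum_le_sum fun i _ => habs_t i
        _ = (n:ℝ) * ‖y-xs‖ := by
            rw [Finset.sum_const, Finset.card_univ, Fintype.card_fin, nsmul_eq_mul]
    calc σ' ≤ (n:ℝ)*‖y-xs‖ := h1
      _ < (n:ℝ)*(ε1/(n:ℝ)) := by exact mul_lt_mul_of_pos_left hlt hn0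
      _ = ε1 := by field_simp [hn0.ne']
  have hs1 : σ' < 1/2 :=
    lt_of_lt_of_le hσ'ε ((min_le_left _ _).trans (min_le_left _ _))
  have hs2 : σ' < δ*M/(44*μ*(n:ℝ)) :=
    lt_of_lt_of_le hσ'ε ((min_le_left _ _).trans (min_le_right _ _))
  have hs3 : σ' < δ/(8*(n:ℝ)) := lt_of_lt_of_le hσ'ε (min_le_right _ _)
  have hs2' : 44*μ*(n:ℝ)*σ' < δ*M := by
    rw [lt_div_iff₀ (by positivity)] at hs2; linarith only [hs2]
  have hs3' : 8*(n:ℝ)*σ' < δ := by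
    rw [lt_div_iff₀ (by positivity)] at hs3; linarith only [hs3]
  have hσσ' : |σ| ≤ σ' := Finset.abs_sum_le_sum_abs _ _
  have hσl := abs_le.mp hσσ'
  have hρ0 : 0 ≤ ρ := Finset.sum_nonneg fun i _ => sq_nonneg _
  have hρσ' : ρ ≤ σ'^2 := by
    have := Finset.sum_sq_le_sq_sum_of_nonneg
      (f := fun i => |t i|) (s := Finset.univ) (fun i _ => abs_nonneg _)
    rw [← hσ'def] at this
    simpa [sq_abs] using this
  have hσ'ρ : σ'^2 ≤ (n:ℝ) * ρ := by
    have h1 := Finset.sum_mul_sq_le_sq_mul_sq Finset.univ (fun _ => (1:ℝ)) (fun i => |t i|)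
    simp only [one_mul, one_pow, Finset.sum_const, Finset.card_univ, Fintype.card_fin,
      nsmul_eq_mul, mul_one, sq_abs] at h1
    rw [← hσ'def, ← hρdef] at h1
    exact h1
  have hρpos : 0 < ρ := by
    have hyne : y - xs ≠ 0 := fun h => by simp [h] at hne
    have hex : ∃ i, y i - xs i ≠ 0 := by
      by_contra h
      push_neg at h
      apply hyne; funext i; simpa [Pi.sub_apply] using h i
    obtain ⟨i, hi⟩ := hex
    have hti : t i ≠ 0 := by
      rw [htdef]; simp only; exact div_ne_zero hi (ne_of_gt (h1x i))
    exact Finset.sum_pos' (fun j _ => sq_nonneg _)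
      ⟨i, Finset.mem_univ i, by positivity⟩
  set R : ℝ := ∏ i, (1 + t i) with hRdef
  have hσ'1 : σ' ≤ 1 := by linarith
  have hT := prod_taylor2 Finset.univ t (by rw [← hσ'def]; exact hσ'1)
  rw [← hσ'def, ← hσdef, ← hρdef, ← hRdef] at hT
  have hTl := (abs_le.mp hT).1
  have hTr := (abs_le.mp hT).2
  have hσsq : σ^2 ≤ σ'^2 := by nlinarith only [hσl.1, hσl.2]
  have hcube : σ'^3 ≤ σ'^2 / 2 := by
    nlinarith only [mul_le_mul_of_nonneg_left hs1.le (sq_nonneg σ')]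
  have hR1σ : |R - 1 - σ| ≤ σ'^2 := by
    rw [abs_le]
    constructor <;> linarith only [hTl, hTr, hσsq, hcube, hρ0, hρσ', sq_nonneg σ]
  have hD := abs_le.mp hR1σ
  have hR0 : (0:ℝ) < R := Finset.prod_pos fun i _ => h1t0 i
  have hsq14 : σ'^2 ≤ 1/4 := by nlinarith only [hs1, hσ'0]
  have hR14 : 1/4 ≤ R := by linarith only [hD.1, hσl.1, hs1, hsq14]
  have hY : (∏ j, (1 + y j)) = P * R := by
    rw [hRdef, hPdef, ← Finset.prod_mul_distrib]
    apply Finset.prod_congr rfl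
    intro i _
    rw [h1t i, hv]
    simp only
    field_simp [(h1x i).ne']
  have hsy : ∑ i, v i / (1 + t i) = (n:ℝ) - 1 + Q / R := by
    calc ∑ i, v i/(1+t i) = ∑ i, 1/(1+y i) := Finset.sum_congr rfl fun i _ => by
          rw [h1t i]
          rw [div_mul_eq_div_div_swap]
          rw [div_self (ne_of_gt (hv0 i))]
      _ = (n:ℝ)-1 + (1-a)/∏ j, (1+y j) := hsum_aux y h1y hyB
      _ = (n:ℝ)-1 + Q/R := by rw [hY, hQdef, div_div]
  have hcon : ∑ i, v i * t i / (1 + t i) = Q * (R - 1) / R := by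
    have h1 : ∀ i, v i * t i / (1 + t i) = v i - v i / (1 + t i) := fun i => by
      field_simp [(h1t0 i).ne']; ring
    rw [Finset.sum_congr rfl fun i _ => h1 i, Finset.sum_sub_distrib, hsumv, hsy]
    field_simp [hR0.ne']
    ring
  set τ : ℝ := ∑ i, v i * t i with hτdef
  set A : ℝ := ∑ i, v i * (t i)^2 / (1 + t i) with hAdef
  have hτA : τ = Q * (R - 1) / R + A := by
    rw [hτdef, hAdef, ← hcon, ← Finset.sum_add_distrib]
    apply Finset.sum_congr rfl; intro i _
    field_simp [(h1t0 i).ne']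
  have hA0 : 0 ≤ A := Finset.sum_nonneg fun i _ =>
    div_nonneg (mul_nonneg (hv0 i).le (sq_nonneg _)) (h1t0 i).le
  have hAρ : A ≤ ρ := by
    apply Finset.sum_le_sum; intro i _
    rw [div_le_iff₀ (h1t0 i)]
    nlinarith only [hvle i, sq_nonneg (t i)]
  set β : ℝ := τ - Q * σ with hβdef
  have hβm : β = ∑ i, m i * t i := by
    rw [hβdef, hτdef, hσdef, hmdef, Finset.mul_sum, ← Finset.sum_sub_distrib]
    apply Finset.sum_congr rfl; intro i _; simp only; ring
  have hβ : |β| ≤ 11 * σ'^2 := by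
    have hR1 : |R - 1| ≤ σ'^2 + σ' := by
      have h0 : R - 1 - σ + σ = R - 1 := by ring
      rw [← h0]
      calc |R-1-σ+σ| ≤ |R-1-σ| + |σ| := abs_add_le _ _
        _ ≤ σ'^2 + σ' := by linarith only [hR1σ, hσσ']
    have hX : |(R - 1 - σ) - σ * (R - 1)| ≤ 5/2 * σ'^2 := by
      have h1 : |σ * (R-1)| ≤ σ' * (σ'^2 + σ') := by
        rw [abs_mul]
        exact mul_le_mul hσσ' hR1 (abs_nonneg _) hσ'0
      calc |(R-1-σ) - σ*(R-1)| ≤ |R-1-σ| + |σ*(R-1)| := abs_sub _ _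
        _ ≤ σ'^2 + σ'*(σ'^2+σ') := by linarith only [hR1σ, h1]
        _ ≤ 5/2*σ'^2 := by linarith only [hcube]
    have hid : β = Q * ((R - 1 - σ) - σ*(R-1)) / R + A := by
      rw [hβdef, hτA]; field_simp [hR0.ne']; ring
    have hq : |Q * ((R-1-σ) - σ*(R-1)) / R| ≤ 10 * σ'^2 := by
      rw [abs_div, abs_mul, abs_of_pos hQ0, abs_of_pos hR0, div_le_iff₀ hR0]
      nlinarith only [hX, hQ1, hQ0.le, hR14, abs_nonneg ((R-1-σ) - σ*(R-1)), sq_nonneg σ']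
    rw [hid]
    calc |Q * ((R-1-σ) - σ*(R-1)) / R + A|
        ≤ |Q*((R-1-σ)-σ*(R-1))/R| + |A| := abs_add_le _ _
      _ ≤ 10*σ'^2 + σ'^2 := by
          rw [abs_of_nonneg hA0]; linarith only [hq, hρσ', hAρ]
      _ = 11*σ'^2 := by ring
  have hcs : (σ - c*β)^2 ≤ (1 - δ) * ρ := by
    have h1 := Finset.sum_mul_sq_le_sq_mul_sq Finset.univ (fun i => 1 - c*m i) t
    have h2 : ∑ i, (1 - c*m i) * t i = σ - c*β := by
      rw [hβm, hσdef, Finset.mul_sum, ← Finset.sum_sub_distrib]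
      apply Finset.sum_congr rfl; intro i _; ring
    rw [h2, hCSnorm, ← hρdef] at h1
    exact h1
  clear_value β A τ R σ' ρ σ t ε1 c δ M μ m Q P v
  have hσ2 : σ^2 ≤ (1 - δ/2) * ρ := by
    have hβσ : β*σ ≤ 11*σ'^2 * σ' := by
      calc β*σ ≤ |β*σ| := le_abs_self _
        _ = |β| * |σ| := abs_mul _ _
        _ ≤ 11*σ'^2*σ' := mul_le_mul hβ hσσ' (abs_nonneg _) (mul_nonneg (by norm_num) (sq_nonneg _))
    have h3 : c*(β*σ) ≤ c*(11*σ'^2*σ') := mul_le_mul_of_nonneg_left hβσ hc0.le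
    have h4 : 44*c*(n:ℝ)*σ' < δ := by
      have he : 44*c*(n:ℝ)*σ' = (44*μ*(n:ℝ)*σ')/M := by rw [hcdef]; ring
      rw [he, div_lt_iff₀ hM0]; linarith only [hs2']
    have h5 : c*(11*σ'^2*σ') ≤ 11*(c*σ')*((n:ℝ)*ρ) := by
      have : c*(11*σ'^2*σ') = 11*(c*σ')*σ'^2 := by ring
      rw [this]
      exact mul_le_mul_of_nonneg_left hσ'ρ (mul_nonneg (by norm_num) (mul_nonneg hc0.le hσ'0))
    have h6 : 11*(c*σ')*((n:ℝ)*ρ) ≤ (δ/4)*ρ := by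
      linarith only [mul_le_mul_of_nonneg_right h4.le hρ0]
    have h7 : c*(β*σ) ≤ (δ/4)*ρ := le_trans (h3.trans h5) h6
    linarith only [hcs, h7, sq_nonneg (c*β)]
  have hfinal : R - 1 - σ < 0 := by
    have h8 : σ'^3 ≤ σ' * ((n:ℝ)*ρ) := by
      nlinarith only [mul_le_mul_of_nonneg_left hσ'ρ hσ'0]
    have h9 : σ' * ((n:ℝ)*ρ) ≤ (δ/8)*ρ := by
      linarith only [mul_le_mul_of_nonneg_right hs3'.le hρ0]
    linarith only [hTr, hσ2, h8, h9, mul_pos hδ0 hρpos]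
  have hgoal : R < 1 + σ := by linarith only [hfinal]
  have hmain : ∏ j, (1+y j) < P * (1 + σ) := by
    rw [hY]; exact mul_lt_mul_of_pos_left hgoal hP0
  exact hmain
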